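/- For each T with 0 < T < τ₁, there exists a unique Y ≥ 0 such that 1 = U₁ ∫_ε^{ħω_D} (1/√(ξ² + Y)) tanh(√(ξ² + Y)/(2T)) dξ; moreover Y > 0. -/
import Mathlib

open Real Set intervalIntegral

lemma my_continuous_tanh : Continuous Real.tanh := by
  have : Real.tanh = fun y => Real.sinh y / Real.cosh y := funext Real.tanh_eq_sinh_div_cosh
  rw [this]
  exact Real.continuous_sinh.div Real.continuous_cosh fun x => (Real.cosh_pos x).ne'

lemma my_tanh_strictMono : StrictMono Real.tanh := by
  intro a b hab
  rw [Real.tanh_eq_sinh_div_cosh, Real.tanh_eq_sinh_div_cosh,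
    div_lt_div_iff₀ (Real.cosh_pos a) (Real.cosh_pos b)]
  have h1 : Real.sinh (a - b) < 0 := by
    have := Real.sinh_lt_sinh.mpr (show a - b < 0 by linarith)
    simpa using this
  rw [Real.sinh_sub] at h1
  nlinarith [Real.cosh_pos a, Real.cosh_pos b]

lemma my_tanh_pos {x : ℝ} (hx : 0 < x) : 0 < Real.tanh x := by
  rw [Real.tanh_eq_sinh_div_cosh]
  exact div_pos (by rwa [Real.sinh_pos_iff]) (Real.cosh_pos x)

lemma my_tanh_lt_one (x : ℝ) : Real.tanh x < 1 := by
  rw [Real.tanh_eq_sinh_div_cosh, div_lt_one (Real.cosh_pos x)]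
  nlinarith [Real.cosh_sub_sinh x, Real.exp_pos (-x)]

lemma my_hasDerivAt_tanh (x : ℝ) : HasDerivAt Real.tanh (1 / Real.cosh x ^ 2) x := by
  have h := (Real.hasDerivAt_sinh x).div (Real.hasDerivAt_cosh x) (Real.cosh_pos x).ne'
  have e : (Real.cosh x * Real.cosh x - Real.sinh x * Real.sinh x) / Real.cosh x ^ 2
      = 1 / Real.cosh x ^ 2 := by
    congr 1
    nlinarith [Real.cosh_sq_sub_sinh_sq x]
  rw [e] at h
  have : Real.tanh = fun y => Real.sinh y / Real.cosh y := funext Real.tanh_eq_sinh_div_cosh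
  rw [this]
  exact h

lemma my_tanh_div_lt {a b : ℝ} (ha : 0 < a) (hab : a < b) :
    Real.tanh b / b < Real.tanh a / a := by
  have key : StrictAntiOn (fun x => Real.tanh x / x) (Set.Icc a b) := by
    apply strictAntiOn_of_deriv_neg (convex_Icc a b)
    · exact (my_continuous_tanh.continuousOn.div continuousOn_id
        fun x hx => (lt_of_lt_of_le ha hx.1).ne')
    · intro x hx
      rw [interior_Icc] at hx
      have hx0 : 0 < x := lt_trans ha hx.1
      have hd : HasDerivAt (fun y => Real.tanh y / y)
          ((1 / Real.cosh x ^ 2 * x - Real.tanh x * 1) / x ^ 2) x :=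
        (my_hasDerivAt_tanh x).div (hasDerivAt_id' x) hx0.ne'
      rw [hd.deriv]
      have hc := Real.cosh_pos x
      have hkey : x < Real.sinh x * Real.cosh x := by
        have h1 : 2 * x < Real.sinh (2 * x) := Real.self_lt_sinh_iff.mpr (by linarith)
        rw [Real.sinh_two_mul] at h1; linarith
      apply div_neg_of_neg_of_pos _ (by positivity)
      rw [Real.tanh_eq_sinh_div_cosh, sub_neg, mul_one, div_mul_eq_mul_div, one_mul,
        div_lt_div_iff₀ (by positivity) hc]
      nlinarith
  exact key (left_mem_Icc.mpr hab.le) (right_mem_Icc.mpr hab.le) hab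

noncomputable def g0 : ℝ → ℝ := fun u => if u = 0 then 1 else Real.tanh u / u

lemma g0_of_pos {u : ℝ} (hu : 0 < u) : g0 u = Real.tanh u / u := if_neg hu.ne'

lemma continuous_g0 : Continuous g0 := by
  rw [continuous_iff_continuousAt]
  intro u
  by_cases hu : u = 0
  · subst hu
    have hd : HasDerivAt Real.tanh 1 0 := by simpa using my_hasDerivAt_tanh 0
    have hslope := hasDerivAt_iff_tendsto_slope.mp hd
    unfold ContinuousAt
    have h0 : g0 0 = 1 := if_pos rfl
    rw [h0, ← nhdsNE_sup_pure (0 : ℝ)]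
    refine Filter.Tendsto.sup ?_ ?_
    · refine hslope.congr' ?_
      refine Filter.eventuallyEq_of_mem self_mem_nhdsWithin fun v hv => ?_
      have hv0 : v ≠ 0 := hv
      simp [slope_def_field, g0, if_neg hv0, Real.tanh_zero]
    · rw [← h0]; exact tendsto_pure_nhds g0 0
  · have heq : ∀ᶠ v in nhds u, Real.tanh v / v = g0 v := by
      filter_upwards [isOpen_compl_singleton.mem_nhds hu] with v hv
      exact (if_neg hv).symm
    exact (my_continuous_tanh.continuousAt.div continuousAt_id hu).congr heq

lemma g0_scale {c s : ℝ} (hc : 0 < c) (hs : 0 < s) :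
    c⁻¹ * g0 (s / c) = Real.tanh (s / c) / s := by
  rw [g0_of_pos (div_pos hs hc)]
  field_simp

set_option maxHeartbeats 1000000 in
/-- For each T with 0 < T < τ₁, there exists a unique Y ≥ 0 such that
1 = U₁ ∫_ε^{ħω_D} (1/√(ξ² + Y)) tanh(√(ξ² + Y)/(2T)) dξ; moreover Y > 0. -/
theorem stmt5 (U₁ ε ω τ₁ : ℝ) (hU : 0 < U₁) (hε : 0 < ε) (hεω : ε < ω)
    (hτ₁ : 0 < τ₁)
    (hτ : 1 = U₁ * ∫ ξ in ε..ω, (1 / ξ) * Real.tanh (ξ / (2 * τ₁)))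
    (T : ℝ) (hT : 0 < T) (hTτ : T < τ₁) :
    (∃! Y : ℝ, 0 ≤ Y ∧
      1 = U₁ * ∫ ξ in ε..ω,
        (1 / Real.sqrt (ξ ^ 2 + Y)) * Real.tanh (Real.sqrt (ξ ^ 2 + Y) / (2 * T))) ∧
    (∀ Y : ℝ, 0 ≤ Y →
      (1 = U₁ * ∫ ξ in ε..ω,
        (1 / Real.sqrt (ξ ^ 2 + Y)) * Real.tanh (Real.sqrt (ξ ^ 2 + Y) / (2 * T))) →
      0 < Y) := by
  have h2T : (0 : ℝ) < 2 * T := by linarith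
  set Φ : ℝ → ℝ → ℝ := fun Y ξ => (2 * T)⁻¹ * g0 (Real.sqrt (ξ ^ 2 + Y) / (2 * T)) with hΦdef
  have hΦcont : Continuous (Function.uncurry Φ) := by
    rw [hΦdef]
    show Continuous fun p : ℝ × ℝ => (2 * T)⁻¹ * g0 (Real.sqrt (p.2 ^ 2 + p.1) / (2 * T))
    apply continuous_const.mul
    exact continuous_g0.comp
      ((Real.continuous_sqrt.comp ((continuous_snd.pow 2).add continuous_fst)).div_const _)
  have hΦY : ∀ Y : ℝ, Continuous (Φ Y) := by
    intro Y
    simp only [hΦdef]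
    apply continuous_const.mul
    exact continuous_g0.comp
      ((Real.continuous_sqrt.comp ((continuous_id.pow 2).add continuous_const)).div_const _)
  set H : ℝ → ℝ := fun Y => U₁ * ∫ ξ in ε..ω, Φ Y ξ with hHdef
  have hHcont : Continuous H :=
    continuous_const.mul
      (intervalIntegral.continuous_parametric_intervalIntegral_of_continuous' hΦcont ε ω)
  -- basic sqrt facts
  have hsle : ∀ Y ξ : ℝ, 0 ≤ Y → ε ≤ ξ → ε ≤ Real.sqrt (ξ ^ 2 + Y) := by
    intro Y ξ hY hξ
    rw [show ε = Real.sqrt (ε ^ 2) from (Real.sqrt_sq hε.le).symm]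
    exact Real.sqrt_le_sqrt (by nlinarith)
  have hΦval : ∀ Y ξ : ℝ, 0 ≤ Y → ε ≤ ξ →
      Φ Y ξ = Real.tanh (Real.sqrt (ξ ^ 2 + Y) / (2 * T)) / Real.sqrt (ξ ^ 2 + Y) := by
    intro Y ξ hY hξ
    exact g0_scale h2T (lt_of_lt_of_le hε (hsle Y ξ hY hξ))
  -- the integral in the statement agrees with the Φ-integral
  have key : ∀ Y : ℝ, 0 ≤ Y →
      (∫ ξ in ε..ω, (1 / Real.sqrt (ξ ^ 2 + Y)) * Real.tanh (Real.sqrt (ξ ^ 2 + Y) / (2 * T)))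
        = ∫ ξ in ε..ω, Φ Y ξ := by
    intro Y hY
    apply intervalIntegral.integral_congr
    intro ξ hξ
    rw [Set.uIcc_of_le hεω.le] at hξ
    rw [hΦval Y ξ hY hξ.1]
    show (1 / Real.sqrt (ξ ^ 2 + Y)) * Real.tanh (Real.sqrt (ξ ^ 2 + Y) / (2 * T)) = _
    rw [one_div, inv_mul_eq_div]
  have keyH : ∀ Y : ℝ, 0 ≤ Y →
      ((1 = U₁ * ∫ ξ in ε..ω,
        (1 / Real.sqrt (ξ ^ 2 + Y)) * Real.tanh (Real.sqrt (ξ ^ 2 + Y) / (2 * T))) ↔ H Y = 1) := by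
    intro Y hY
    simp only [hHdef]
    rw [key Y hY]
    exact eq_comm
  -- strict pointwise monotonicity in Y
  have hmono : ∀ Y₁ Y₂ : ℝ, 0 ≤ Y₁ → Y₁ < Y₂ → ∀ ξ ∈ Set.Icc ε ω, Φ Y₂ ξ < Φ Y₁ ξ := by
    intro Y₁ Y₂ hY₁ h12 ξ hξ
    have hs₁ : 0 < Real.sqrt (ξ ^ 2 + Y₁) := lt_of_lt_of_le hε (hsle Y₁ ξ hY₁ hξ.1)
    have hs₂ : Real.sqrt (ξ ^ 2 + Y₁) < Real.sqrt (ξ ^ 2 + Y₂) :=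
      Real.sqrt_lt_sqrt (by nlinarith [hξ.1, hε]) (by linarith)
    have ha : 0 < Real.sqrt (ξ ^ 2 + Y₁) / (2 * T) := div_pos hs₁ h2T
    have hab : Real.sqrt (ξ ^ 2 + Y₁) / (2 * T) < Real.sqrt (ξ ^ 2 + Y₂) / (2 * T) := by
      gcongr
    have := my_tanh_div_lt ha hab
    simp only [hΦdef, g0_of_pos ha, g0_of_pos (ha.trans hab)]
    exact mul_lt_mul_of_pos_left this (by positivity)
  have hHanti : StrictAntiOn H (Set.Ici 0) := by
    intro Y₁ h1 Y₂ h2 h12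
    apply mul_lt_mul_of_pos_left _ hU
    exact intervalIntegral.integral_lt_integral_of_continuousOn_of_le_of_exists_lt hεω
      (hΦY Y₂).continuousOn (hΦY Y₁).continuousOn
      (fun ξ hξ => (hmono Y₁ Y₂ h1 h12 ξ ⟨hξ.1.le, hξ.2⟩).le)
      ⟨ε, left_mem_Icc.mpr hεω.le, hmono Y₁ Y₂ h1 h12 ε (left_mem_Icc.mpr hεω.le)⟩
  -- H 0 > 1
  have hΦ0 : ∀ ξ : ℝ, ε ≤ ξ → Φ 0 ξ = Real.tanh (ξ / (2 * T)) / ξ := by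
    intro ξ hξ
    have hξ0 : 0 ≤ ξ := le_trans hε.le hξ
    rw [hΦval 0 ξ le_rfl hξ, add_zero, Real.sqrt_sq hξ0]
  have hlt0 : ∀ ξ : ℝ, ε ≤ ξ → (1 / ξ) * Real.tanh (ξ / (2 * τ₁)) < Φ 0 ξ := by
    intro ξ hξ
    have hξ0 : 0 < ξ := lt_of_lt_of_le hε hξ
    rw [hΦ0 ξ hξ, one_div, inv_mul_eq_div]
    rw [div_lt_div_iff_of_pos_right hξ0]
    exact my_tanh_strictMono (by
      rw [div_lt_div_iff₀ (by linarith) h2T]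
      nlinarith)
  have hH0 : 1 < H 0 := by
    rw [hτ]
    simp only [hHdef]
    apply mul_lt_mul_of_pos_left _ hU
    apply intervalIntegral.integral_lt_integral_of_continuousOn_of_le_of_exists_lt hεω
    · apply ContinuousOn.mul
      · exact continuousOn_const.div continuousOn_id fun x hx => (lt_of_lt_of_le hε hx.1).ne'
      · exact (my_continuous_tanh.comp (continuous_id.div_const _)).continuousOn
    · exact (hΦY 0).continuousOn
    · exact fun ξ hξ => (hlt0 ξ hξ.1.le).le
    · exact ⟨ε, left_mem_Icc.mpr hεω.le, hlt0 ε le_rfl⟩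
  -- H Y₀ < 1
  set K := U₁ * (ω - ε) with hKdef
  have hK : 0 < K := mul_pos hU (by linarith)
  set Y₀ := (K + 1) ^ 2 with hY₀def
  have hY₀pos : 0 < Y₀ := by positivity
  have hbound : H Y₀ < 1 := by
    have hC : ∀ ξ ∈ Set.Icc ε ω, Φ Y₀ ξ ≤ (K + 1)⁻¹ := by
      intro ξ hξ
      have hsY : K + 1 ≤ Real.sqrt (ξ ^ 2 + Y₀) := by
        rw [show K + 1 = Real.sqrt ((K + 1) ^ 2) from (Real.sqrt_sq (by linarith)).symm]
        exact Real.sqrt_le_sqrt (by nlinarith [hξ.1, hε])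
      have hs0 : 0 < Real.sqrt (ξ ^ 2 + Y₀) := lt_of_lt_of_le (by linarith) hsY
      rw [hΦval Y₀ ξ hY₀pos.le hξ.1]
      calc Real.tanh (Real.sqrt (ξ ^ 2 + Y₀) / (2 * T)) / Real.sqrt (ξ ^ 2 + Y₀)
          ≤ 1 / Real.sqrt (ξ ^ 2 + Y₀) := by
            gcongr
            exact (my_tanh_lt_one _).le
        _ ≤ (K + 1)⁻¹ := by
            rw [one_div]
            gcongr

    have hint : (∫ ξ in ε..ω, Φ Y₀ ξ) ≤ (ω - ε) * (K + 1)⁻¹ := by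
      have := intervalIntegral.integral_mono_on (μ := MeasureTheory.volume) hεω.le
        ((hΦY Y₀).intervalIntegrable ε ω) intervalIntegrable_const hC
      simpa using this
    have : H Y₀ ≤ U₁ * ((ω - ε) * (K + 1)⁻¹) := by
      simp only [hHdef]
      exact mul_le_mul_of_nonneg_left hint hU.le
    have hfrac : U₁ * ((ω - ε) * (K + 1)⁻¹) < 1 := by
      rw [← mul_assoc, ← hKdef, ← div_eq_mul_inv, div_lt_one (by linarith)]
      linarith
    linarith
  -- IVT
  obtain ⟨Y, hYmem, hYeq⟩ :=
    intermediate_value_Ioo' hY₀pos.le hHcont.continuousOn ⟨hbound, hH0⟩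
  refine ⟨⟨Y, ⟨hYmem.1.le, (keyH Y hYmem.1.le).mpr hYeq⟩, ?_⟩, ?_⟩
  · rintro Y' ⟨hY', hEq'⟩
    exact hHanti.injOn hY' (Set.mem_Ici.mpr hYmem.1.le)
      (((keyH Y' hY').mp hEq').trans hYeq.symm)
  · intro Z hZ hEq
    rcases hZ.lt_or_eq with h | h
    · exact h
    · exfalso
      have := (keyH Z hZ).mp hEq
      rw [← h] at this
      linarith [hH0, this.le]
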